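/- In the two-row model M2 with T rounds (row 2 revealed with per-round reward R2, row 1 unrevealed with maximum reward R1 > R2, unlearned reward C1 ≤ R1, learning probability α ∈ (0,1)), the optimal policy is a threshold policy: there exists t* ∈ {1,…,T+1} such that it is optimal to play row 1 at every round t < t* while row 1 is unlearned, to play row 2 at every round t ≥ t* while row 1 is unlearned, and to play row 1 forever once it is learned. -/
import Mathlib


/-- Optimal expected payoff in the two-row model M2 with `n` rounds remaining, in the
state where row 1 is still unlearned: playing unlearned row 1 yields `C1` immediately
and the human learns it with probability `α` after responding (a learned row 1 then
yields `R1` deterministically each round); playing the revealed row 2 yields `R2`. -/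
noncomputable def WM2 (α R1 R2 C1 : ℝ) : ℕ → ℝ
  | 0 => 0
  | n + 1 => max (C1 + α * (R1 * (n : ℝ)) + (1 - α) * WM2 α R1 R2 C1 n)
      (R2 + WM2 α R1 R2 C1 n)

lemma WM2_zero (α R1 R2 C1 : ℝ) : WM2 α R1 R2 C1 0 = 0 := rfl

lemma WM2_succ (α R1 R2 C1 : ℝ) (n : ℕ) :
    WM2 α R1 R2 C1 (n + 1) = max (C1 + α * (R1 * (n : ℝ)) + (1 - α) * WM2 α R1 R2 C1 n)
      (R2 + WM2 α R1 R2 C1 n) := rfl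

lemma WM2_D_ub (α R1 R2 C1 : ℝ) (hα0 : 0 < α) (hα1 : α < 1) (hC1 : C1 ≤ R1) :
    ∀ n : ℕ, α * (R1 * (n : ℝ) - WM2 α R1 R2 C1 n) ≤ R1 - C1 := by
  intro n
  induction n with
  | zero => simp [WM2_zero]; linarith
  | succ n ih =>
      have h1 : C1 + α * (R1 * (n : ℝ)) + (1 - α) * WM2 α R1 R2 C1 n
          ≤ WM2 α R1 R2 C1 (n + 1) := by
        rw [WM2_succ]; exact le_max_left _ _
      have h2 := mul_le_mul_of_nonneg_left h1 (le_of_lt hα0)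
      have h3 := mul_le_mul_of_nonneg_left ih (by linarith : (0:ℝ) ≤ 1 - α)
      push_cast
      nlinarith [h2, h3]

lemma WM2_D_mono (α R1 R2 C1 : ℝ) (hα0 : 0 < α) (hα1 : α < 1) (hR : R2 < R1)
    (hC1 : C1 ≤ R1) (n : ℕ) :
    R1 * (n : ℝ) - WM2 α R1 R2 C1 n ≤ R1 * ((n + 1 : ℕ) : ℝ) - WM2 α R1 R2 C1 (n + 1) := by
  have hub := WM2_D_ub α R1 R2 C1 hα0 hα1 hC1 n
  rw [WM2_succ]
  rcases max_cases (C1 + α * (R1 * (n : ℝ)) + (1 - α) * WM2 α R1 R2 C1 n)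
      (R2 + WM2 α R1 R2 C1 n) with ⟨h, _⟩ | ⟨h, _⟩ <;> rw [h] <;> push_cast <;> nlinarith

/-- advantage of exploring with `n` rounds remaining after this one -/
noncomputable def advM2 (α R1 R2 C1 : ℝ) (n : ℕ) : ℝ :=
  C1 - R2 + α * (R1 * (n : ℝ) - WM2 α R1 R2 C1 n)

lemma advM2_mono (α R1 R2 C1 : ℝ) (hα0 : 0 < α) (hα1 : α < 1) (hR : R2 < R1)
    (hC1 : C1 ≤ R1) : Monotone (advM2 α R1 R2 C1) := by
  apply monotone_nat_of_le_succ
  intro n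
  have := WM2_D_mono α R1 R2 C1 hα0 hα1 hR hC1 n
  unfold advM2
  nlinarith

/-- In the two-row model M2 over `T` rounds, the optimal policy is a threshold policy:
there is a threshold round `t*` such that while row 1 is unlearned it is optimal to
play row 1 before round `t*` and row 2 from round `t*` on, and once row 1 is learned
it is optimal to play row 1 forever. -/
theorem stmt_11 (α R1 R2 C1 : ℝ) (T : ℕ)
    (hα0 : 0 < α) (hα1 : α < 1) (hR : R2 < R1) (hC1 : C1 ≤ R1) :
    ∃ tstar : ℕ, 1 ≤ tstar ∧ tstar ≤ T + 1 ∧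
      (∀ t : ℕ, 1 ≤ t → t ≤ T → t < tstar →
        R2 + WM2 α R1 R2 C1 (T - t)
          ≤ C1 + α * (R1 * ((T : ℝ) - t)) + (1 - α) * WM2 α R1 R2 C1 (T - t)) ∧
      (∀ t : ℕ, 1 ≤ t → t ≤ T → tstar ≤ t →
        C1 + α * (R1 * ((T : ℝ) - t)) + (1 - α) * WM2 α R1 R2 C1 (T - t)
          ≤ R2 + WM2 α R1 R2 C1 (T - t)) ∧
      (∀ n : ℕ, R2 + R1 * (n : ℝ) ≤ R1 + R1 * (n : ℝ)) := by
  classical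
  -- explore is weakly optimal at round t iff 0 ≤ advM2 (T - t)
  have key : ∀ t : ℕ, t ≤ T →
      (R2 + WM2 α R1 R2 C1 (T - t)
          ≤ C1 + α * (R1 * ((T : ℝ) - t)) + (1 - α) * WM2 α R1 R2 C1 (T - t)
        ↔ 0 ≤ advM2 α R1 R2 C1 (T - t)) := by
    intro t ht
    have hcast : ((T - t : ℕ) : ℝ) = (T : ℝ) - t := by
      push_cast [Nat.cast_sub ht]; ring
    unfold advM2
    rw [hcast]
    constructor <;> intro h <;> nlinarith
  by_cases hall : ∀ t : ℕ, 1 ≤ t → t ≤ T → 0 ≤ advM2 α R1 R2 C1 (T - t)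
  · refine ⟨T + 1, le_add_self, le_refl _, ?_, ?_, ?_⟩
    · intro t h1 h2 _
      exact (key t h2).mpr (hall t h1 h2)
    · intro t h1 h2 h3; omega
    · intro n; linarith
  · push_neg at hall
    obtain ⟨t0, h1, h2, h3⟩ := hall
    have hex : ∃ t : ℕ, 1 ≤ t ∧ t ≤ T ∧ advM2 α R1 R2 C1 (T - t) < 0 := ⟨t0, h1, h2, h3⟩
    set tstar := Nat.find hex with htsdef
    obtain ⟨hts1, hts2, hts3⟩ := Nat.find_spec hex
    refine ⟨tstar, hts1, by omega, ?_, ?_, ?_⟩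
    · intro t h1 h2 hlt
      apply (key t h2).mpr
      by_contra hneg
      push_neg at hneg
      exact Nat.find_min hex hlt ⟨h1, h2, hneg⟩
    · intro t h1 h2 hge
      have hmono := advM2_mono α R1 R2 C1 hα0 hα1 hR hC1 (Nat.sub_le_sub_left hge T)
      have : advM2 α R1 R2 C1 (T - t) < 0 := lt_of_le_of_lt hmono hts3
      have hk := key t h2
      by_contra hcon
      push_neg at hcon
      exact absurd (hk.mp hcon.le) (by linarith)
    · intro n; linarith
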